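/- Let (Ω, 𝒢, P) be a probability space with a filtration (𝒢_t)_{t≥0}, let S = (S_t)_{t≥0} be a nonnegative progressively measurable process, let τ be a stopping time, and let (T_n)_{n≥1} be a nondecreasing sequence of stopping times with T_n → ∞ almost surely. Suppose that for every n the stopped process (S_{t∧τ∧T_n})_{t≥0} is a (𝒢_t)-martingale. Fix t ≥ 0. If liminf_{n→∞} E[S_{T_n} · 1_{{T_n ≤ t∧τ}}] > 0, then E[S_{t∧τ}] < E[S_0]. In particular, the stopped process (S_{s∧τ})_{s≥0} is not a (𝒢_t)-martingale (it is a strict local martingale). -/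

import Mathlib

open MeasureTheory Filter Set
open scoped NNReal Topology

/-- If `S` is a nonnegative progressively measurable process,
`τ` a stopping time, and `(T n)` a nondecreasing sequence of stopping times tending
a.s. to infinity such that each stopped process `S^{τ ∧ T n}` is a martingale, and if
`liminf_n E[S_{T n} 1_{T n ≤ t ∧ τ}] > 0` for a fixed time `t`, then
`E[S_{t ∧ τ}] < E[S_0]`; in particular `S^τ` is not a martingale. -/
theorem stmt0 {Ω : Type*} {mΩ : MeasurableSpace Ω} (P : Measure Ω)
    [IsProbabilityMeasure P] (𝒢 : Filtration ℝ≥0 mΩ)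
    (S : ℝ≥0 → Ω → ℝ) (hprog : ProgMeasurable 𝒢 S)
    (hS_nonneg : ∀ t ω, 0 ≤ S t ω)
    (τ : Ω → ℝ≥0) (hτ : IsStoppingTime 𝒢 (fun ω => (τ ω : WithTop ℝ≥0)))
    (T : ℕ → Ω → ℝ≥0) (hT : ∀ n, IsStoppingTime 𝒢 (fun ω => (T n ω : WithTop ℝ≥0)))
    (hT_mono : ∀ ω, Monotone fun n => T n ω)
    (hT_tendsto : ∀ᵐ ω ∂P, Tendsto (fun n => T n ω) atTop atTop)
    (hmart : ∀ n, Martingale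
      (MeasureTheory.stoppedProcess S fun ω => min (τ ω) (T n ω)) 𝒢 P)
    (t : ℝ≥0)
    (hliminf : 0 < liminf
      (fun n => ∫ ω in {ω | T n ω ≤ min t (τ ω)}, S (T n ω) ω ∂P) atTop) :
    (∫ ω, S (min t (τ ω)) ω ∂P) < (∫ ω, S 0 ω ∂P) ∧
      ¬ Martingale (MeasureTheory.stoppedProcess S (fun ω => (τ ω : WithTop ℝ≥0))) 𝒢 P := by
  classical
  set g : Ω → ℝ := fun ω => S (min t (τ ω)) ω with hg_def
  set B : ℕ → Set Ω := fun n => {ω | T n ω ≤ min t (τ ω)} with hB_def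
  set A : ℕ → Set Ω := fun n => (B n)ᶜ with hA_def
  have hτ_meas : Measurable τ := by
    exact (hτ.measurable.mono hτ.measurableSpace_le le_rfl).untopA
  have hT_meas : ∀ n, Measurable (T n) := fun n =>
    by exact ((hT n).measurable.mono (hT n).measurableSpace_le le_rfl).untopA
  have hB_meas : ∀ n, MeasurableSet (B n) := fun n =>
    measurableSet_le (hT_meas n) (measurable_const.min hτ_meas)
  have hA_meas : ∀ n, MeasurableSet (A n) := fun n => (hB_meas n).compl
  -- monotone structure of the sets
  have hB_anti : Antitone B := by
    intro m n hmn ω hω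
    exact le_trans (hT_mono ω hmn) hω
  have hA_mono : Monotone A := fun m n hmn => compl_subset_compl.2 (hB_anti hmn)
  -- strong measurability of g
  have hg_sm : StronglyMeasurable g := by
    have h := stronglyMeasurable_stoppedValue_of_le hprog (hτ.min_const t)
      (fun ω => min_le_right _ _)
    have h' : StronglyMeasurable[𝒢 t] g := by
      have : g = stoppedValue S fun ω => min (τ ω) t := by
        funext ω
        show S (min t (τ ω)) ω = S (min (τ ω : WithTop ℝ≥0) t).untopA ω
        rw [← WithTop.coe_min, min_comm]; rfl
      rw [this]; exact h
    exact h'.mono (𝒢.le t)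
  have hg_nonneg : ∀ ω, 0 ≤ g ω := fun ω => hS_nonneg _ ω
  -- the stopped martingale at time t
  set M : ℕ → Ω → ℝ := fun n ω => S (min t (min (τ ω) (T n ω))) ω with hM_def
  have hM_eq : ∀ n, (MeasureTheory.stoppedProcess S fun ω => min (τ ω) (T n ω)) t = M n :=
    fun n => rfl
  have hM_int : ∀ n, Integrable (M n) P := fun n => by
    rw [← hM_eq n]; exact (hmart n).integrable t
  -- expectation of M n equals expectation of S 0
  have hM_exp : ∀ n, ∫ ω, M n ω ∂P = ∫ ω, S 0 ω ∂P := by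
    intro n
    have h := (hmart n).setIntegral_eq (zero_le : 0 ≤ t)
      (MeasurableSet.univ : MeasurableSet[𝒢 0] univ)
    rw [setIntegral_univ, setIntegral_univ] at h
    rw [← hM_eq n, ← h]
    refine integral_congr_ae (Eventually.of_forall fun ω => ?_)
    simp [MeasureTheory.stoppedProcess]
  -- on B n, M n = S (T n ·) ·
  have hM_on_B : ∀ n, ∀ ω ∈ B n, M n ω = S (T n ω) ω := by
    intro n ω hω
    have h1 : T n ω ≤ t := hω.trans (min_le_left _ _)
    have h2 : T n ω ≤ τ ω := hω.trans (min_le_right _ _)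
    simp [hM_def, min_eq_right h2, min_eq_right h1]
  -- on A n, M n = g
  have hM_on_A : ∀ n, ∀ ω ∈ A n, M n ω = g ω := by
    intro n ω hω
    have hlt : min t (τ ω) < T n ω := not_le.mp hω
    have : min t (min (τ ω) (T n ω)) = min t (τ ω) := by
      rw [← min_assoc]
      exact min_eq_left hlt.le
    simp [hM_def, hg_def, this]
  -- splitting of the expectation
  have hsplit : ∀ n, ∫ ω, S 0 ω ∂P
      = (∫ ω in B n, S (T n ω) ω ∂P) + ∫ ω in A n, g ω ∂P := by
    intro n
    rw [← hM_exp n, ← integral_add_compl (hB_meas n) (hM_int n)]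
    congr 1
    · exact setIntegral_congr_fun (hB_meas n) (hM_on_B n)
    · exact setIntegral_congr_fun (hA_meas n) (hM_on_A n)
  -- g is integrable on each A n
  have hg_intOn : ∀ n, IntegrableOn g (A n) P := by
    intro n
    refine (IntegrableOn.congr_fun ((hM_int n).integrableOn) ?_ (hA_meas n))
    exact hM_on_A n
  -- the integrals over A n are bounded by ∫ S 0
  have h_bound : ∀ n, ∫ ω in A n, g ω ∂P ≤ ∫ ω, S 0 ω ∂P := by
    intro n
    rw [hsplit n]
    have : 0 ≤ ∫ ω in B n, S (T n ω) ω ∂P :=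
      setIntegral_nonneg (hB_meas n) fun ω _ => hS_nonneg _ ω
    linarith
  -- a.e. every ω belongs to some A n
  have h_ae_union : ∀ᵐ ω ∂P, ω ∈ ⋃ n, A n := by
    filter_upwards [hT_tendsto] with ω hω
    obtain ⟨n, hn⟩ := (hω.eventually (eventually_gt_atTop t)).exists
    exact mem_iUnion.2 ⟨n, fun h => absurd (h.trans (min_le_left _ _)) (not_le.mpr hn)⟩
  -- g is integrable
  have hg_int : Integrable g P := by
    refine ⟨hg_sm.aestronglyMeasurable, ?_⟩
    rw [hasFiniteIntegral_iff_ofReal (Eventually.of_forall hg_nonneg)]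
    have h_eq : (fun ω => ENNReal.ofReal (g ω))
        =ᵐ[P] (⋃ n, A n).indicator fun ω => ENNReal.ofReal (g ω) := by
      filter_upwards [h_ae_union] with ω hω
      rw [indicator_of_mem hω]
    rw [lintegral_congr_ae h_eq]
    have h_ind : ((⋃ n, A n).indicator fun ω => ENNReal.ofReal (g ω))
        = fun ω => ⨆ n, (A n).indicator (fun ω => ENNReal.ofReal (g ω)) ω := by
      funext ω
      by_cases hω : ω ∈ ⋃ n, A n
      · obtain ⟨n, hn⟩ := mem_iUnion.mp hω
        rw [indicator_of_mem hω]
        refine le_antisymm (le_iSup_of_le n ?_) (iSup_le fun m => ?_)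
        · rw [indicator_of_mem hn]
        · by_cases hm : ω ∈ A m
          · rw [indicator_of_mem hm]
          · rw [indicator_of_notMem hm]; exact zero_le
      · rw [indicator_of_notMem hω]
        refine le_antisymm zero_le (iSup_le fun m => ?_)
        rw [indicator_of_notMem (fun hm => hω (mem_iUnion.2 ⟨m, hm⟩))]
    rw [h_ind, lintegral_iSup]
    · refine lt_of_le_of_lt (iSup_le fun n => ?_) (ENNReal.ofReal_lt_top :
        ENNReal.ofReal (∫ ω, S 0 ω ∂P) < ⊤)
      rw [lintegral_indicator (hA_meas n)]
      rw [← ofReal_integral_eq_lintegral_ofReal (hg_intOn n)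
        (Eventually.of_forall fun ω => hg_nonneg ω)]
      exact ENNReal.ofReal_le_ofReal (h_bound n)
    · exact fun n => (ENNReal.measurable_ofReal.comp hg_sm.measurable).indicator (hA_meas n)
    · intro m n hmn ω
      dsimp only
      by_cases hm : ω ∈ A m
      · rw [indicator_of_mem hm, indicator_of_mem (hA_mono hmn hm)]
      · rw [indicator_of_notMem hm]; exact zero_le
  -- convergence of the set integrals over A n to the full integral
  have h_union_int : ∫ ω in ⋃ n, A n, g ω ∂P = ∫ ω, g ω ∂P := by
    have : P.restrict (⋃ n, A n) = P.restrict univ := by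
      refine Measure.restrict_congr_set ?_
      filter_upwards [h_ae_union] with ω hω
      simp only [eq_iff_iff]
      exact ⟨fun _ => trivial, fun _ => hω⟩
    rw [this, Measure.restrict_univ]
  have h_tend : Tendsto (fun n => ∫ ω in A n, g ω ∂P) atTop (𝓝 (∫ ω, g ω ∂P)) := by
    rw [← h_union_int]
    exact tendsto_setIntegral_of_monotone hA_meas hA_mono hg_int.integrableOn
  -- hence the integrals over B n converge
  have h_tendB : Tendsto (fun n => ∫ ω in B n, S (T n ω) ω ∂P) atTop
      (𝓝 ((∫ ω, S 0 ω ∂P) - ∫ ω, g ω ∂P)) := by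
    have : (fun n => ∫ ω in B n, S (T n ω) ω ∂P)
        = fun n => (∫ ω, S 0 ω ∂P) - ∫ ω in A n, g ω ∂P := by
      funext n
      rw [hsplit n]; ring
    rw [this]
    exact tendsto_const_nhds.sub h_tend
  have h_liminf_eq : liminf (fun n => ∫ ω in B n, S (T n ω) ω ∂P) atTop
      = (∫ ω, S 0 ω ∂P) - ∫ ω, g ω ∂P := h_tendB.liminf_eq
  have h_main : (∫ ω, S (min t (τ ω)) ω ∂P) < ∫ ω, S 0 ω ∂P := by
    have := hliminf
    rw [h_liminf_eq] at this
    linarith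
  refine ⟨h_main, fun hM => ?_⟩
  have h := hM.setIntegral_eq (zero_le : 0 ≤ t)
    (MeasurableSet.univ : MeasurableSet[𝒢 0] univ)
  rw [setIntegral_univ, setIntegral_univ] at h
  have h0 : ∫ ω, MeasureTheory.stoppedProcess S (fun ω => (τ ω : WithTop ℝ≥0)) 0 ω ∂P = ∫ ω, S 0 ω ∂P := by
    refine integral_congr_ae (Eventually.of_forall fun ω => ?_)
    show S (min ((0 : ℝ≥0) : WithTop ℝ≥0) (τ ω : WithTop ℝ≥0)).untopA ω = S 0 ω
    rw [← WithTop.coe_min, min_eq_left zero_le]; rfl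
  have ht : ∫ ω, MeasureTheory.stoppedProcess S (fun ω => (τ ω : WithTop ℝ≥0)) t ω ∂P = ∫ ω, S (min t (τ ω)) ω ∂P := by
    refine integral_congr_ae (Eventually.of_forall fun ω => ?_)
    show S (min (t : WithTop ℝ≥0) (τ ω : WithTop ℝ≥0)).untopA ω = S (min t (τ ω)) ω
    rw [← WithTop.coe_min]; rfl
  rw [h0, ht] at h
  linarith
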